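/- Let R be a Noetherian ring, M a finite R-module, and I ⊆ R an ideal not contained in any associated prime of M. Then the set of primes p ⊆ R with I ⊆ p and depth_{R_p} M_p ≤ 1 is finite. -/

import Mathlib

universe u

open Pointwise

section Helpers

variable {R : Type*} [CommRing R] {M : Type*} [AddCommGroup M] [Module R M]

lemma mem_smul_top_iff' (r : R) (y : M) :
    y ∈ r • (⊤ : Submodule R M) ↔ ∃ m : M, r • m = y := by
  rw [show r • (⊤ : Submodule R M)
      = Submodule.map (DistribMulAction.toLinearMap R M r) ⊤ from rfl,
    Submodule.mem_map]
  simp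
  exact Iff.rfl

lemma isAssociatedPrime_iff_ann [IsNoetherianRing R] {p : Ideal R} :
    IsAssociatedPrime p M ↔ p.IsPrime ∧ ∃ x : M, p = (Submodule.span R {x}).annihilator := by
  simp only [isAssociatedPrime_iff, Submodule.bot_colon']

/-- Subadditivity of associated primes along a submodule. -/
lemma associatedPrimes_subset_union [IsNoetherianRing R] (N : Submodule R M) :
    associatedPrimes R M ⊆ associatedPrimes R N ∪ associatedPrimes R (M ⧸ N) := by
  intro p hp'
  rw [AssociatedPrimes.mem_iff, isAssociatedPrime_iff_ann] at hp'
  obtain ⟨hp, x, rfl⟩ := hp'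
  by_cases hc : ∃ r : R, r • x ∈ N ∧ r • x ≠ 0
  · obtain ⟨r, hrN, hr0⟩ := hc
    left
    rw [AssociatedPrimes.mem_iff, isAssociatedPrime_iff_ann]
    refine ⟨hp, ⟨r • x, hrN⟩, ?_⟩
    ext s
    rw [Submodule.mem_annihilator_span_singleton, Submodule.mem_annihilator_span_singleton]
    constructor
    · intro hs
      ext
      show s • (r • x) = 0
      rw [smul_comm, hs, smul_zero]
    · intro hs
      have hs' : s • (r • x) = 0 := congrArg Subtype.val hs
      rw [smul_smul] at hs'
      have hsr : s * r ∈ (Submodule.span R {x}).annihilator :=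
        (Submodule.mem_annihilator_span_singleton x (s * r)).mpr hs'
      rcases hp.mem_or_mem hsr with h | h
      · exact (Submodule.mem_annihilator_span_singleton x s).mp h
      · exact absurd ((Submodule.mem_annihilator_span_singleton x r).mp h) hr0
  · right
    push_neg at hc
    rw [AssociatedPrimes.mem_iff, isAssociatedPrime_iff_ann]
    refine ⟨hp, N.mkQ x, ?_⟩
    ext s
    rw [Submodule.mem_annihilator_span_singleton, Submodule.mem_annihilator_span_singleton]
    rw [← map_smul, show N.mkQ (s • x) = Submodule.Quotient.mk (s • x) from rfl,
      Submodule.Quotient.mk_eq_zero]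
    exact ⟨fun h => h ▸ N.zero_mem, fun h => hc s h⟩

end Helpers

section Finiteness

variable (R : Type*) [CommRing R] (M : Type*) [AddCommGroup M] [Module R M]

/-- Finiteness of the set of associated primes of a finite module over a Noetherian ring. -/
lemma associatedPrimes_finite [IsNoetherianRing R] [Module.Finite R M] :
    (associatedPrimes R M).Finite := by
  have key : ∀ N : Submodule R M, (associatedPrimes R (M ⧸ N)).Finite := by
    intro N
    induction N using IsNoetherian.induction with
    | _ N IH =>
    by_cases hN : N = ⊤
    · subst hN
      haveI : Subsingleton (M ⧸ (⊤ : Submodule R M)) :=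
        Submodule.Quotient.subsingleton_iff.mpr rfl
      rw [associatedPrimes.eq_empty_of_subsingleton]
      exact Set.finite_empty
    · haveI : Nontrivial (M ⧸ N) :=
        Submodule.Quotient.nontrivial_iff.mpr hN
      obtain ⟨p, hp'⟩ := associatedPrimes.nonempty R (M ⧸ N)
      rw [AssociatedPrimes.mem_iff, isAssociatedPrime_iff_ann] at hp'
      obtain ⟨hp, z, hz⟩ := hp'
      have hz0 : z ≠ 0 := by
        rintro rfl
        apply hp.ne_top
        rwa [Submodule.span_singleton_eq_bot.mpr rfl, Submodule.annihilator_bot] at hz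
      set W : Submodule R (M ⧸ N) := Submodule.span R {z} with hW
      set N' : Submodule R M := W.comap N.mkQ with hN'
      have hle : N ≤ N' := fun y hy => by
        show N.mkQ y ∈ W
        rw [show N.mkQ y = Submodule.Quotient.mk y from rfl,
          (Submodule.Quotient.mk_eq_zero N).mpr hy]
        exact W.zero_mem
      obtain ⟨m, hm⟩ := Submodule.Quotient.mk_surjective N z
      have hmN' : m ∈ N' := by
        show N.mkQ m ∈ W
        rw [show N.mkQ m = Submodule.Quotient.mk m from rfl, hm]
        exact Submodule.mem_span_singleton_self z
      have hmN : m ∉ N := fun h => hz0 (by rw [← hm, Submodule.Quotient.mk_eq_zero N]; exact h)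
      have hlt : N < N' := lt_of_le_of_ne hle (fun e => hmN (e ▸ hmN'))
      have h1 : (associatedPrimes R W).Finite := by
        have hker : LinearMap.ker (LinearMap.toSpanSingleton R (M ⧸ N) z) = p := by
          ext r
          rw [LinearMap.mem_ker, LinearMap.toSpanSingleton_apply, hz,
            Submodule.mem_annihilator_span_singleton]
        have e1 : ((R : Type _) ⧸ p) ≃ₗ[R] W :=
          (hker ▸ (LinearMap.toSpanSingleton R (M ⧸ N) z).quotKerEquivRange).trans
            (LinearEquiv.ofEq _ _ (LinearMap.span_singleton_eq_range R (M ⧸ N) z).symm)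
        rw [← LinearEquiv.AssociatedPrimes.eq e1,
          associatedPrimes.eq_singleton_of_isPrimary hp.isPrimary]
        exact Set.finite_singleton _
      have h2 : (associatedPrimes R ((M ⧸ N) ⧸ W)).Finite := by
        have hmap : Submodule.map N.mkQ N' = W :=
          Submodule.map_comap_eq_of_surjective (Submodule.mkQ_surjective N) W
        have e2 : ((M ⧸ N) ⧸ W) ≃ₗ[R] M ⧸ N' :=
          hmap ▸ Submodule.quotientQuotientEquivQuotient N N' hle
        rw [LinearEquiv.AssociatedPrimes.eq e2]
        exact IH N' hlt
      exact (h1.union h2).subset (associatedPrimes_subset_union W)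
  have e : (M ⧸ (⊥ : Submodule R M)) ≃ₗ[R] M := Submodule.quotEquivOfEqBot ⊥ rfl
  rw [← LinearEquiv.AssociatedPrimes.eq e]
  exact key ⊥

/-- Prime avoidance: existence of a regular element in an ideal avoiding all
associated primes. -/
lemma exists_mem_isSMulRegular [IsNoetherianRing R] [Module.Finite R M]
    (J : Ideal R) (hJ : ∀ q ∈ associatedPrimes R M, ¬ J ≤ q) :
    ∃ y ∈ J, IsSMulRegular M y := by
  classical
  have hfin := associatedPrimes_finite R M
  have hns : ¬ ((J : Set R) ⊆ ⋃ q ∈ (hfin.toFinset : Set (Ideal R)), (q : Set R)) := by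
    intro hsub
    rw [Ideal.subset_union_prime (⊥ : Ideal R) (⊥ : Ideal R)
      (fun q hq _ _ => (hfin.mem_toFinset.mp hq).isPrime)] at hsub
    obtain ⟨q, hq, hle⟩ := hsub
    exact hJ q (hfin.mem_toFinset.mp hq) hle
  obtain ⟨y, hyJ, hy⟩ := Set.not_subset.mp hns
  refine ⟨y, hyJ, fun n n' hnn => ?_⟩
  by_contra hne
  apply hy
  have hmem : y ∈ ⋃ p ∈ associatedPrimes R M, (p : Set R) := by
    rw [biUnion_associatedPrimes_eq_zero_divisors]
    refine ⟨n - n', sub_ne_zero.mpr hne, ?_⟩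
    have : y • n = y • n' := hnn
    rw [smul_sub, this, sub_self]
  obtain ⟨_, ⟨p, rfl⟩, _, ⟨hp, rfl⟩, hyp⟩ := hmem
  exact Set.mem_biUnion (show p ∈ (hfin.toFinset : Set (Ideal R)) by
    rwa [Finset.mem_coe, hfin.mem_toFinset]) hyp

end Finiteness

section Localized

variable {R : Type u} [CommRing R] {M : Type u} [AddCommGroup M] [Module R M]

/-- A regular element stays (weakly) regular on a localized module. -/
lemma isSMulRegular_localizedModule (S : Submonoid R) {x : R} (hx : IsSMulRegular M x) :
    IsSMulRegular (LocalizedModule S M) x := by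
  intro u v h
  induction u, v using LocalizedModule.induction_on₂ with
  | _ m m' s s' =>
    have h0 : x • LocalizedModule.mk m s = x • LocalizedModule.mk m' s' := h
    have h' : LocalizedModule.mk (x • m) s = LocalizedModule.mk (x • m') s' := by
      rwa [LocalizedModule.smul'_mk, LocalizedModule.smul'_mk] at h0
    show LocalizedModule.mk m s = LocalizedModule.mk m' s'
    rw [LocalizedModule.mk_eq] at h' ⊢
    obtain ⟨c, hc⟩ := h'
    refine ⟨c, hx ?_⟩
    show x • (c • s' • m) = x • (c • s • m')
    have e1 : x • c • s' • m = c • s' • x • m := by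
      rw [smul_comm x c, smul_comm x s']
    have e2 : x • c • s • m' = c • s • x • m' := by
      rw [smul_comm x c, smul_comm x s]
    rw [e1, e2, hc]

variable (p : PrimeSpectrum R)

local notation "Rp" => Localization.AtPrime p.asIdeal
local notation "Mp" => LocalizedModule p.asIdeal.primeCompl M

/-- Descent of associated primes : if the maximal ideal of `R_p` is associated to
`M_p ⧸ x M_p`, then `p` is associated to `M ⧸ x M`. -/
lemma isAssociatedPrime_of_localized [IsNoetherianRing R] (x : R)
    (h : IsAssociatedPrime (IsLocalRing.maximalIdeal Rp)
      (QuotSMulTop (algebraMap R Rp x) Mp)) :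
    p.asIdeal ∈ associatedPrimes R (QuotSMulTop x M) := by
  classical
  obtain ⟨-, z, hz⟩ := isAssociatedPrime_iff_ann.mp h
  obtain ⟨w, rfl⟩ := Submodule.Quotient.mk_surjective _ z
  have hw : ∃ (m : M) (s : p.asIdeal.primeCompl), LocalizedModule.mk m s = w := by
    induction w using LocalizedModule.induction_on with
    | _ m s => exact ⟨m, s, rfl⟩
  obtain ⟨m, s, rfl⟩ := hw
  obtain ⟨T, hT⟩ : ∃ T : Finset R, Ideal.span (T : Set R) = p.asIdeal :=
    (isNoetherian_def.mp inferInstance p.asIdeal)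
  have key : ∀ a : R, a ∈ p.asIdeal →
      ∃ (u : p.asIdeal.primeCompl) (m' : M), (u : R) • a • m = x • m' := by
    intro a ha
    have ha' : algebraMap R Rp a ∈ IsLocalRing.maximalIdeal Rp :=
      (IsLocalization.AtPrime.to_map_mem_maximal_iff Rp p.asIdeal a).mpr ha
    rw [hz, Submodule.mem_annihilator_span_singleton, ← Submodule.Quotient.mk_smul,
      Submodule.Quotient.mk_eq_zero] at ha'
    rw [algebraMap_smul] at ha'
    obtain ⟨v, hv⟩ := (mem_smul_top_iff' _ _).mp ha'
    have hv' : ∃ (m₁ : M) (s₁ : p.asIdeal.primeCompl),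
        LocalizedModule.mk m₁ s₁ = v := by
      induction v using LocalizedModule.induction_on with
      | _ m₁ s₁ => exact ⟨m₁, s₁, rfl⟩
    obtain ⟨m₁, s₁, rfl⟩ := hv'
    rw [algebraMap_smul, LocalizedModule.smul'_mk, LocalizedModule.smul'_mk,
      LocalizedModule.mk_eq] at hv
    obtain ⟨c, hc⟩ := hv
    refine ⟨c * s₁, c • s • m₁, ?_⟩
    calc ((c * s₁ : p.asIdeal.primeCompl) : R) • a • m
        = (c : R) • (s₁ : R) • a • m := by rw [Submonoid.coe_mul, mul_smul]
      _ = c • s₁ • a • m := rfl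
      _ = c • s • x • m₁ := hc.symm
      _ = x • c • s • m₁ := by
          rw [smul_comm x c, smul_comm x s]
  choose! g g' hg using key
  set u : p.asIdeal.primeCompl := ∏ a ∈ T, g a with hu
  rw [AssociatedPrimes.mem_iff, isAssociatedPrime_iff_ann]
  refine ⟨p.2, Submodule.Quotient.mk ((u : R) • m), le_antisymm ?_ ?_⟩
  · have h0 : Ideal.span (T : Set R) ≤
        (Submodule.span R {(Submodule.Quotient.mk ((u : R) • m) : QuotSMulTop x M)}).annihilator := by
      rw [Ideal.span_le]
      intro a haT
      have haP : a ∈ p.asIdeal := hT ▸ Ideal.subset_span haT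
      rw [SetLike.mem_coe, Submodule.mem_annihilator_span_singleton,
        ← Submodule.Quotient.mk_smul, Submodule.Quotient.mk_eq_zero]
      have hrest : (u : R) = (g a : R) * ((∏ b ∈ T.erase a, g b : p.asIdeal.primeCompl) : R) := by
        rw [hu, ← Finset.mul_prod_erase T g haT, Submonoid.coe_mul]
      have he : a • ((u : R) • m)
          = ((∏ b ∈ T.erase a, g b : p.asIdeal.primeCompl) : R) • ((g a : R) • a • m) := by
        rw [smul_smul, smul_smul, smul_smul, hrest]
        ring_nf
      rw [he, hg a haP]
      exact (mem_smul_top_iff' _ _).mpr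
        ⟨((∏ b ∈ T.erase a, g b : p.asIdeal.primeCompl) : R) • g' a, by rw [smul_comm]⟩
    rwa [hT] at h0
  · intro r hr
    rw [Submodule.mem_annihilator_span_singleton, ← Submodule.Quotient.mk_smul,
      Submodule.Quotient.mk_eq_zero] at hr
    obtain ⟨m', hm'⟩ := (mem_smul_top_iff' _ _).mp hr
    have hmax : algebraMap R Rp r ∈ IsLocalRing.maximalIdeal Rp := by
      rw [hz, Submodule.mem_annihilator_span_singleton, ← Submodule.Quotient.mk_smul,
        Submodule.Quotient.mk_eq_zero, algebraMap_smul]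
      refine (mem_smul_top_iff' _ _).mpr ⟨LocalizedModule.mk m' (u * s), ?_⟩
      rw [algebraMap_smul, LocalizedModule.smul'_mk, LocalizedModule.smul'_mk]
      have : x • m' = (u : R) • r • m := by
        rw [hm', smul_smul, smul_smul, mul_comm]
      rw [this, show (u : R) • r • m = u • (r • m) from rfl,
        LocalizedModule.mk_cancel_common_left u s (r • m)]
    exact (IsLocalization.AtPrime.to_map_mem_maximal_iff Rp p.asIdeal r).mp hmax

end Localized

/-- `depthGE R J M n` : there is a weakly regular sequence on `M` of length `n` with entries
in `J`.  For a Noetherian local ring `R` and a finite module `M` with `J • M ≠ M` this says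
exactly `depth_J M ≥ n` (and the zero module has depth `+∞`, so `depthGE` always holds
for it, matching the usual convention). -/
def depthGE (R : Type u) [CommRing R] (J : Ideal R)
    (M : Type u) [AddCommGroup M] [Module R M] (n : ℕ) : Prop :=
  ∃ rs : List R, rs.length = n ∧ (∀ r ∈ rs, r ∈ J) ∧
    RingTheory.Sequence.IsWeaklyRegular M rs


/-- Let `R` be a Noetherian ring, `M` a finite `R`-module, and `I ⊆ R` an ideal not contained
in any associated prime of `M`.  Then the set of primes `p ⊇ I` with
`depth_{R_p} M_p ≤ 1` is finite. -/
theorem finite_primes_of_low_depth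
    (R : Type u) [CommRing R] [IsNoetherianRing R]
    (M : Type u) [AddCommGroup M] [Module R M] [Module.Finite R M]
    (I : Ideal R) (hI : ∀ p ∈ associatedPrimes R M, ¬ I ≤ p) :
    {p : PrimeSpectrum R | I ≤ p.asIdeal ∧
      ¬ depthGE (Localization.AtPrime p.asIdeal)
          (IsLocalRing.maximalIdeal (Localization.AtPrime p.asIdeal))
          (LocalizedModule p.asIdeal.primeCompl M) 2}.Finite := by
  classical
  -- choose a regular element `x ∈ I`
  obtain ⟨x, hxI, hxreg⟩ := exists_mem_isSMulRegular R M I hI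
  -- the candidate finite superset
  have hfin : (associatedPrimes R (QuotSMulTop x M)).Finite :=
    associatedPrimes_finite R (QuotSMulTop x M)
  have hinj : Set.InjOn PrimeSpectrum.asIdeal
      (PrimeSpectrum.asIdeal ⁻¹' associatedPrimes R (QuotSMulTop x M)) :=
    fun a _ b _ h => PrimeSpectrum.ext h
  refine Set.Finite.subset (hfin.preimage hinj) ?_
  rintro p ⟨hIp, hdepth⟩
  by_contra hpB
  apply hdepth
  -- set up local data
  set Rp := Localization.AtPrime p.asIdeal with hRp
  set Mp := LocalizedModule p.asIdeal.primeCompl M with hMp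
  set x' : Rp := algebraMap R Rp x with hx'
  have hx'mem : x' ∈ IsLocalRing.maximalIdeal Rp :=
    (IsLocalization.AtPrime.to_map_mem_maximal_iff Rp p.asIdeal x).mpr (hIp hxI)
  -- x' is regular on Mp
  have hx'reg : IsSMulRegular Mp x' := by
    intro u v h
    have h0 : (algebraMap R Rp x) • u = (algebraMap R Rp x) • v := h
    have h' : x • u = x • v := by
      rwa [algebraMap_smul, algebraMap_smul] at h0
    exact isSMulRegular_localizedModule p.asIdeal.primeCompl hxreg h'
  -- the maximal ideal is not associated to Mp / x' Mp
  have hmax : IsLocalRing.maximalIdeal Rp ∉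
      associatedPrimes Rp (QuotSMulTop x' Mp) := by
    intro hcon
    exact hpB (isAssociatedPrime_of_localized p x hcon)
  -- instances on the localization
  haveI : IsNoetherianRing Rp :=
    IsLocalization.isNoetherianRing p.asIdeal.primeCompl Rp inferInstance
  haveI : Module.Finite Rp Mp :=
    Module.Finite.of_isLocalizedModule p.asIdeal.primeCompl
      (LocalizedModule.mkLinearMap p.asIdeal.primeCompl M)
  -- find a regular element on the quotient
  have hAvoid : ∀ q ∈ associatedPrimes Rp (QuotSMulTop x' Mp),
      ¬ IsLocalRing.maximalIdeal Rp ≤ q := by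
    intro q hq hle
    have : q = IsLocalRing.maximalIdeal Rp :=
      le_antisymm (IsLocalRing.le_maximalIdeal hq.isPrime.ne_top) hle
    exact hmax (this ▸ hq)
  obtain ⟨y, hyJ, hyreg⟩ :=
    exists_mem_isSMulRegular Rp (QuotSMulTop x' Mp) (IsLocalRing.maximalIdeal Rp) hAvoid
  refine ⟨[x', y], rfl, ?_, ?_⟩
  · intro r hr
    rcases List.mem_pair.mp hr with rfl | rfl
    · exact hx'mem
    · exact hyJ
  · rw [RingTheory.Sequence.isWeaklyRegular_cons_iff]
    refine ⟨hx'reg, ?_⟩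
    rw [RingTheory.Sequence.isWeaklyRegular_cons_iff]
    exact ⟨hyreg, RingTheory.Sequence.IsWeaklyRegular.nil _ _⟩
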